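/- arXiv:1506.03479 — 7 statements merged into one kernel-verified Lean document; each statement's English description precedes it below -/
import Mathlib

section
/- Consider a two-arc composite equilibrium where each atomic player i with weight Tⁱ > 0 and flow (xⁱ₁, xⁱ₂) with xⁱ₁ + xⁱ₂ = Tⁱ satisfies, for each arc r, the condition: xⁱ_r > 0 implies c_r(ξ_r) + xⁱ_r·c_r′(ξ_r) = min over s of (c_s(ξ_s) + xⁱ_s·c_s′(ξ_s)), where ξ_r is the aggregate weight on arc r and c₁′, c₂′ > 0. If two atomic players i, j satisfy Tⁱ ≥ Tʲ, then xⁱ_r ≥ xʲ_r for each arc r, with equality if and only if Tⁱ = Tʲ or xⁱ_r = xʲ_r = 0. -/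
lemma aux_two_arc (u0 u1 v0 v1 a0 a1 d0 d1 Ti Tj : ℝ)
    (hd0 : 0 < d0) (hd1 : 0 < d1)
    (hu : u0 + u1 = Ti) (hv : v0 + v1 = Tj)
    (hu0 : 0 ≤ u0) (hu1 : 0 ≤ u1) (hv0 : 0 ≤ v0) (hv1 : 0 ≤ v1)
    (hPu : 0 < u0 → a0 + u0 * d0 ≤ a1 + u1 * d1)
    (hQu : 0 < u1 → a1 + u1 * d1 ≤ a0 + u0 * d0)
    (hPv : 0 < v0 → a0 + v0 * d0 ≤ a1 + v1 * d1)
    (hQv : 0 < v1 → a1 + v1 * d1 ≤ a0 + v0 * d0)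
    (hij : Tj ≤ Ti) :
    v0 ≤ u0 ∧ (u0 = v0 ↔ Ti = Tj ∨ (u0 = 0 ∧ v0 = 0)) := by
  have hle : v0 ≤ u0 := by
    by_contra h
    push_neg at h
    have hv0p : 0 < v0 := lt_of_le_of_lt hu0 h
    have hu1p : 0 < u1 := by linarith
    have h1 := hPv hv0p
    have h2 := hQu hu1p
    nlinarith
  refine ⟨hle, ?_, ?_⟩
  · intro he
    by_cases hTc : Ti = Tj
    · exact Or.inl hTc
    · have hTj : Tj < Ti := lt_of_le_of_ne hij (fun h => hTc h.symm)
      have hu1p : 0 < u1 := by linarith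
      have h2 := hQu hu1p
      have hv00 : v0 = 0 := by
        by_contra hne
        have hv0p : 0 < v0 := lt_of_le_of_ne hv0 (Ne.symm hne)
        have h1 := hPv hv0p
        nlinarith
      exact Or.inr ⟨he.trans hv00, hv00⟩
  · rintro (hTc | ⟨h0, h1⟩)
    · by_contra hne
      have hgt : v0 < u0 := lt_of_le_of_ne hle (fun h => hne h.symm)
      have hu0p : 0 < u0 := lt_of_le_of_lt hv0 hgt
      have hv1p : 0 < v1 := by linarith
      have h1 := hPu hu0p
      have h2 := hQv hv1p
      nlinarith
    · rw [h0, h1]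

/-- at a two-arc composite equilibrium, a larger atomic player puts weakly
more weight on every arc, with equality iff equal weights or both flows vanish. -/
theorem larger_player_larger_flow
    (N : ℕ) (c d : Fin 2 → ℝ → ℝ) (T : Fin N → ℝ) (x : Fin N → Fin 2 → ℝ)
    (hT : ∀ i, 0 < T i)
    (hxnn : ∀ i r, 0 ≤ x i r)
    (hsum : ∀ i, x i 0 + x i 1 = T i)
    (hdpos : ∀ r t, 0 < d r t)
    (ξ : Fin 2 → ℝ) (hξ : ∀ r, ξ r = ∑ i, x i r)
    (heq : ∀ i r, 0 < x i r →
      ∀ s, c r (ξ r) + x i r * d r (ξ r) ≤ c s (ξ s) + x i s * d s (ξ s))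
    (i j : Fin N) (hij : T j ≤ T i) :
    ∀ r, x j r ≤ x i r ∧ (x i r = x j r ↔ T i = T j ∨ (x i r = 0 ∧ x j r = 0)) := by
  intro r
  fin_cases r
  · exact aux_two_arc (x i 0) (x i 1) (x j 0) (x j 1)
      (c 0 (ξ 0)) (c 1 (ξ 1)) (d 0 (ξ 0)) (d 1 (ξ 1)) (T i) (T j)
      (hdpos 0 _) (hdpos 1 _) (hsum i) (hsum j)
      (hxnn i 0) (hxnn i 1) (hxnn j 0) (hxnn j 1)
      (fun h => heq i 0 h 1) (fun h => heq i 1 h 0)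
      (fun h => heq j 0 h 1) (fun h => heq j 1 h 0) hij
  · have hsi : x i 1 + x i 0 = T i := by linarith [hsum i]
    have hsj : x j 1 + x j 0 = T j := by linarith [hsum j]
    exact aux_two_arc (x i 1) (x i 0) (x j 1) (x j 0)
      (c 1 (ξ 1)) (c 0 (ξ 0)) (d 1 (ξ 1)) (d 0 (ξ 0)) (T i) (T j)
      (hdpos 1 _) (hdpos 0 _) hsi hsj
      (hxnn i 1) (hxnn i 0) (hxnn j 1) (hxnn j 0)
      (fun h => heq i 1 h 0) (fun h => heq i 0 h 1)
      (fun h => heq j 1 h 0) (fun h => heq j 0 h 1) hij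
end

section
/- Let c₁, c₂ : ℝ → ℝ be increasing with nondecreasing derivatives (convex, C¹, strictly increasing) and suppose numbers ξ̄₁ ∈ [0, M], x̄₁ ∈ [0, ξ̄₁] satisfy c₁(ξ̄₁) ≤ c₂(M − ξ̄₁) and c₁(ξ̄₁) + x̄₁·c₁′(ξ̄₁) ≤ c₂(M − ξ̄₁) + (T^N − x̄₁)·c₂′(M − ξ̄₁), where 0 ≤ x̄₁ ≤ T^N ≤ M. Then for all s ∈ [0, Δξ] with 0 ≤ Δξ ≤ ξ̄₁: (i) c₁(ξ̄₁ − s) ≤ c₂(M − ξ̄₁ + s), and (ii) c₁(ξ̄₁ − s) + (x̄₁ − s)·c₁′(ξ̄₁ − s) ≤ c₂(M − ξ̄₁ + s) + (T^N − x̄₁ + s)·c₂′(M − ξ̄₁ + s) whenever x̄₁ − s ≥ 0. -/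
/-- monotone propagation of the equilibrium first-order inequalities along
shifts of weight from arc 1 to arc 2. -/
theorem foc_inequalities_propagate
    (c₁ c₂ d₁ d₂ : ℝ → ℝ) (M TN ξbar₁ xbar₁ Δξ : ℝ)
    (hc₁mono : StrictMono c₁) (hc₂mono : StrictMono c₂)
    (hd₁ : ∀ t, HasDerivAt c₁ (d₁ t) t)
    (hd₂ : ∀ t, HasDerivAt c₂ (d₂ t) t)
    (hd₁mono : Monotone d₁) (hd₂mono : Monotone d₂)
    (hd₁nn : ∀ t, 0 ≤ d₁ t) (hd₂nn : ∀ t, 0 ≤ d₂ t)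
    (hξbar : ξbar₁ ∈ Set.Icc 0 M)
    (hxbar₁nn : 0 ≤ xbar₁) (hxbar₁le : xbar₁ ≤ ξbar₁)
    (hxbarTN : xbar₁ ≤ TN) (hTNM : TN ≤ M)
    (h1 : c₁ ξbar₁ ≤ c₂ (M - ξbar₁))
    (h2 : c₁ ξbar₁ + xbar₁ * d₁ ξbar₁ ≤ c₂ (M - ξbar₁) + (TN - xbar₁) * d₂ (M - ξbar₁))
    (hΔnn : 0 ≤ Δξ) (hΔle : Δξ ≤ ξbar₁) :
    ∀ s ∈ Set.Icc 0 Δξ,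
      c₁ (ξbar₁ - s) ≤ c₂ (M - ξbar₁ + s) ∧
      (0 ≤ xbar₁ - s →
        c₁ (ξbar₁ - s) + (xbar₁ - s) * d₁ (ξbar₁ - s) ≤
          c₂ (M - ξbar₁ + s) + (TN - xbar₁ + s) * d₂ (M - ξbar₁ + s)) := by
  intro s hs
  obtain ⟨hs0, hsΔ⟩ := hs
  have hc1 : c₁ (ξbar₁ - s) ≤ c₁ ξbar₁ := hc₁mono.monotone (by linarith)
  have hc2 : c₂ (M - ξbar₁) ≤ c₂ (M - ξbar₁ + s) := hc₂mono.monotone (by linarith)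
  refine ⟨by linarith, fun hxs => ?_⟩
  have hA : (xbar₁ - s) * d₁ (ξbar₁ - s) ≤ xbar₁ * d₁ ξbar₁ :=
    mul_le_mul (by linarith) (hd₁mono (by linarith)) (hd₁nn _) hxbar₁nn
  have hB : (TN - xbar₁) * d₂ (M - ξbar₁) ≤ (TN - xbar₁ + s) * d₂ (M - ξbar₁ + s) :=
    mul_le_mul (by linarith) (hd₂mono (by linarith)) (hd₂nn _) (by linarith)
  linarith
end

section
/- Let c₁, c₂ be strictly increasing, C¹, with positive derivatives, and let ξ₁ > ξ̄₁ be aggregate weights on arc 1 (with ξ₂ = M − ξ₁, ξ̄₂ = M − ξ̄₁). Suppose ȳ₁ > 0, ȳ₂ > 0 with ȳ₁ + ȳ₂ = T, and ȳ₁·c₁′(ȳ₁ + s) > B > ȳ₂·c₂′(ȳ₂ + t) for all s ∈ (ξ̄₁ − ȳ₁, M − ȳ₁] and t ∈ [−ȳ₂, ξ̄₂ − ȳ₂), for some constant B. Then ȳ₁·c₁(ξ₁) + ȳ₂·c₂(ξ₂) > ȳ₁·c₁(ξ̄₁) + ȳ₂·c₂(ξ̄₂). -/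
/-- an opponent with fixed flow (ȳ₁, ȳ₂) pays strictly more when the
aggregate weight on arc 1 rises from ξ̄₁ to ξ₁. -/
theorem opponent_cost_strict_increase
    (c₁ c₂ d₁ d₂ : ℝ → ℝ) (M T ξ₁ ξbar₁ ybar₁ ybar₂ B : ℝ)
    (hc₁mono : StrictMono c₁) (hc₂mono : StrictMono c₂)
    (hd₁ : ∀ t, HasDerivAt c₁ (d₁ t) t)
    (hd₂ : ∀ t, HasDerivAt c₂ (d₂ t) t)
    (hd₁pos : ∀ t, 0 < d₁ t) (hd₂pos : ∀ t, 0 < d₂ t)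
    (hξ : ξbar₁ < ξ₁) (hξ₁ : ξ₁ ∈ Set.Icc 0 M) (hξbar₁ : ξbar₁ ∈ Set.Icc 0 M)
    (hy₁ : 0 < ybar₁) (hy₂ : 0 < ybar₂) (hyT : ybar₁ + ybar₂ = T)
    (hB1 : ∀ s ∈ Set.Ioc (ξbar₁ - ybar₁) (M - ybar₁), B < ybar₁ * d₁ (ybar₁ + s))
    (hB2 : ∀ t ∈ Set.Ico (-ybar₂) ((M - ξbar₁) - ybar₂), ybar₂ * d₂ (ybar₂ + t) < B) :
    ybar₁ * c₁ ξbar₁ + ybar₂ * c₂ (M - ξbar₁) <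
      ybar₁ * c₁ ξ₁ + ybar₂ * c₂ (M - ξ₁) := by
  have h₁lt : (0:ℝ) ≤ ξ₁ := hξ₁.1
  have h₁le : ξ₁ ≤ M := hξ₁.2
  have hb0 : (0:ℝ) ≤ ξbar₁ := hξbar₁.1
  -- MVT for c₁ on [ξbar₁, ξ₁]
  obtain ⟨a, ha, hva⟩ := exists_hasDerivAt_eq_slope c₁ d₁ hξ
    (fun t _ => (hd₁ t).continuousAt.continuousWithinAt) (fun t _ => hd₁ t)
  -- MVT for c₂ on [M - ξ₁, M - ξbar₁]
  have hlt2 : M - ξ₁ < M - ξbar₁ := by linarith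
  obtain ⟨b, hb, hvb⟩ := exists_hasDerivAt_eq_slope c₂ d₂ hlt2
    (fun t _ => (hd₂ t).continuousAt.continuousWithinAt) (fun t _ => hd₂ t)
  have hBa : B < ybar₁ * d₁ a := by
    have := hB1 (a - ybar₁) ⟨by linarith [ha.1], by linarith [ha.2, h₁le]⟩
    simpa using this
  have hBb : ybar₂ * d₂ b < B := by
    have := hB2 (b - ybar₂) ⟨by linarith [hb.1, h₁le], by linarith [hb.2]⟩
    simpa using this
  have hden : (0:ℝ) < ξ₁ - ξbar₁ := by linarith
  have hden2 : (0:ℝ) < (M - ξbar₁) - (M - ξ₁) := by linarith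
  have e1 : c₁ ξ₁ - c₁ ξbar₁ = d₁ a * (ξ₁ - ξbar₁) := by
    field_simp at hva; linarith [hva]
  have e2 : c₂ (M - ξbar₁) - c₂ (M - ξ₁) = d₂ b * (ξ₁ - ξbar₁) := by
    field_simp at hvb; nlinarith [hvb]
  nlinarith [mul_lt_mul_of_pos_right hBa hden, mul_lt_mul_of_pos_right hBb hden]
end

section
/- Let h be strictly decreasing on [0, M] and F_l(t) = (M − t)(1 + a(t)) + l·h(t) with a > 0 non-increasing, and let T¹ ≥ T² ≥ … ≥ T^{N−1} > 0 with partial sums T^{[l]} = T¹ + … + T^l. Suppose for some l ∈ {2, …, N−1}: F_l⁻¹(T^{[l]}) > h⁻¹(T^l). Then F_{l−1}⁻¹(T^{[l−1]}) > F_l⁻¹(T^{[l]}). -/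
/-- if F_l⁻¹(T^[l]) > h⁻¹(T^l), then F_{l−1}⁻¹(T^[l−1]) > F_l⁻¹(T^[l]).
Here u = F_l⁻¹(T^[l]), v = F_{l−1}⁻¹(T^[l−1]), w = h⁻¹(T^l). -/
theorem equilibrium_weight_decreasing_in_l
    (h a : ℝ → ℝ) (M : ℝ) (hM : 0 < M) (N : ℕ) (T : ℕ → ℝ)
    (hh : StrictAntiOn h (Set.Icc 0 M))
    (ha_pos : ∀ t ∈ Set.Icc 0 M, 0 < a t)
    (ha_anti : AntitoneOn a (Set.Icc 0 M))
    (hT_pos : ∀ i, 1 ≤ i → i ≤ N - 1 → 0 < T i)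
    (hT_mono : ∀ i j, 1 ≤ i → i ≤ j → j ≤ N - 1 → T j ≤ T i)
    (F : ℕ → ℝ → ℝ)
    (hF : ∀ n t, F n t = (M - t) * (1 + a t) + (n : ℝ) * h t)
    (S : ℕ → ℝ) (hS : ∀ l, S l = ∑ i ∈ Finset.Icc 1 l, T i)
    (l : ℕ) (hl2 : 2 ≤ l) (hlN : l ≤ N - 1)
    (u v w : ℝ)
    (hu : u ∈ Set.Icc 0 M) (hv : v ∈ Set.Icc 0 M) (hw : w ∈ Set.Icc 0 M)
    (hFu : F l u = S l) (hFv : F (l - 1) v = S (l - 1)) (hhw : h w = T l)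
    (hsplit : w < u) :
    u < v := by
  -- F (l-1) is strictly antitone on [0,M]
  have hc : (0 : ℝ) < ((l - 1 : ℕ) : ℝ) := by
    have : 1 ≤ l - 1 := by omega
    exact_mod_cast Nat.lt_of_lt_of_le Nat.zero_lt_one this
  have hP : AntitoneOn (fun t => (M - t) * (1 + a t)) (Set.Icc 0 M) := by
    intro s hs t ht hst
    apply mul_le_mul
    · linarith
    · have := ha_anti hs ht hst
      linarith
    · have := ha_pos t ht
      linarith
    · have := hs.1; have := hs.2; linarith
  have hFanti : StrictAntiOn (F (l - 1)) (Set.Icc 0 M) := by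
    intro s hs t ht hst
    rw [hF, hF]
    have h1 := hP hs ht hst.le
    have h2 : h t < h s := hh hs ht hst
    have h3 : ((l-1:ℕ):ℝ) * h t < ((l-1:ℕ):ℝ) * h s := by
      exact mul_lt_mul_of_pos_left h2 hc
    simp only at h1 ⊢
    linarith
  -- F (l-1) u > F (l-1) v
  have hSl : S l = S (l - 1) + T l := by
    rw [hS, hS]
    have : l = (l - 1) + 1 := by omega
    rw [this, Finset.sum_Icc_succ_top (by omega : 1 ≤ l - 1 + 1)]; congr 2 <;> omega
  have hcast : ((l - 1 : ℕ) : ℝ) = (l : ℝ) - 1 := by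
    have : (1:ℕ) ≤ l := by omega
    push_cast [Nat.cast_sub this]
    ring
  have hhu : h u < T l := by
    have := hh hw hu hsplit
    linarith [hhw ▸ this]
  have hFlu : F (l - 1) u = S l - h u := by
    rw [hF, hcast]
    rw [hF] at hFu
    linarith
  have hgt : F (l - 1) v < F (l - 1) u := by
    rw [hFv, hFlu, hSl]
    linarith
  -- conclude
  by_contra hle
  push_neg at hle
  rcases eq_or_lt_of_le hle with heq | hlt
  · rw [heq] at hgt; exact lt_irrefl _ hgt
  · exact absurd (hFanti hv hu hlt) (by linarith)
end

section
/- Let h be strictly decreasing with inverse h⁻¹, and F_n(t) = (M − t)(1 + a(t)) + n·h(t) with a > 0. Let T¹ ≥ … ≥ T^{N−1} > 0 with partial sums T^{[l]}. Suppose for some l, F_l⁻¹(T^{[l]}) ≤ h⁻¹(T^l). Then F_{l−1}⁻¹(T^{[l−1]}) ≤ F_l⁻¹(T^{[l]}) and F_{l−1}⁻¹(T^{[l−1]}) ≤ h⁻¹(T^l). -/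
/-- if F_l⁻¹(T^[l]) ≤ h⁻¹(T^l), then F_{l−1}⁻¹(T^[l−1]) ≤ F_l⁻¹(T^[l])
and F_{l−1}⁻¹(T^[l−1]) ≤ h⁻¹(T^l). Here u = F_l⁻¹(T^[l]), v = F_{l−1}⁻¹(T^[l−1]),
w = h⁻¹(T^l). -/
theorem backward_induction_step
    (h a : ℝ → ℝ) (M : ℝ) (hM : 0 < M) (N : ℕ) (T : ℕ → ℝ)
    (hh : StrictAntiOn h (Set.Icc 0 M))
    (ha_pos : ∀ t ∈ Set.Icc 0 M, 0 < a t)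
    (ha_anti : AntitoneOn a (Set.Icc 0 M))
    (hT_pos : ∀ i, 1 ≤ i → i ≤ N - 1 → 0 < T i)
    (hT_mono : ∀ i j, 1 ≤ i → i ≤ j → j ≤ N - 1 → T j ≤ T i)
    (F : ℕ → ℝ → ℝ)
    (hF : ∀ n t, F n t = (M - t) * (1 + a t) + (n : ℝ) * h t)
    (S : ℕ → ℝ) (hS : ∀ l, S l = ∑ i ∈ Finset.Icc 1 l, T i)
    (l : ℕ) (hl1 : 1 ≤ l) (hlN : l ≤ N - 1)
    (u v w : ℝ)
    (hu : u ∈ Set.Icc 0 M) (hv : v ∈ Set.Icc 0 M) (hw : w ∈ Set.Icc 0 M)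
    (hFu : F l u = S l) (hFv : F (l - 1) v = S (l - 1)) (hhw : h w = T l)
    (hnosplit : u ≤ w) :
    v ≤ u ∧ v ≤ w := by
  -- F n is strictly antitone on [0, M]
  have hFanti : ∀ n : ℕ, StrictAntiOn (F n) (Set.Icc 0 M) := by
    intro n x hx y hy hxy
    rw [hF, hF]
    have hxM : x < M := lt_of_lt_of_le hxy hy.2
    have h1 : (M - y) * (1 + a y) < (M - x) * (1 + a x) := by
      have hay : 0 < 1 + a y := by linarith [ha_pos y hy]
      calc (M - y) * (1 + a y) < (M - x) * (1 + a y) := by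
            apply mul_lt_mul_of_pos_right (by linarith) hay
        _ ≤ (M - x) * (1 + a x) := by
            exact mul_le_mul_of_nonneg_left (by linarith [ha_anti hx hy hxy.le]) (by linarith)
    have h2 : (n : ℝ) * h y ≤ (n : ℝ) * h x :=
      mul_le_mul_of_nonneg_left (hh hx hy hxy).le (Nat.cast_nonneg n)
    linarith
  -- h w ≤ h u
  have hhu : h w ≤ h u := by
    rcases eq_or_lt_of_le hnosplit with rfl | hlt
    · exact le_refl _
    · exact (hh hu hw hlt).le
  -- S l = S (l-1) + T l
  have hSeq : S l = S (l - 1) + T l := by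
    rw [hS, hS]
    obtain ⟨m, rfl⟩ : ∃ m, l = m + 1 := ⟨l - 1, (Nat.succ_pred_eq_of_pos hl1).symm⟩
    rw [Nat.add_sub_cancel, Finset.sum_Icc_succ_top (by omega)]
  -- F (l-1) u ≤ F (l-1) v
  have key : F (l - 1) u ≤ F (l - 1) v := by
    have hcast : ((l - 1 : ℕ) : ℝ) = (l : ℝ) - 1 := by
      have : (l : ℝ) ≥ 1 := by exact_mod_cast hl1
      push_cast [Nat.cast_sub hl1]; ring
    have hFlu : F (l - 1) u = F l u - h u := by
      rw [hF, hF, hcast]; ring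
    rw [hFlu, hFu, hFv, hSeq]
    linarith [hhu, hhw]
  have hvu : v ≤ u := by
    by_contra hcon
    push_neg at hcon
    exact absurd (hFanti (l - 1) hu hv hcon) (not_lt.mpr key)
  exact ⟨hvu, hvu.trans hnosplit⟩
end

section
/- With F_n and h as above (h strictly decreasing, a > 0), define B_l = F_{l+1}(h⁻¹(T^{l+1})) − T^{[l]} for 0 ≤ l ≤ N−2, where T¹ ≥ T² ≥ … ≥ T^{N−1} > 0. Then B_l ≥ B_{l+1} for all admissible l, and B_l = B_{l+1} if and only if T^{l+1} = T^{l+2}. -/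
/-- the thresholds B_l = F_{l+1}(h⁻¹(T^{l+1})) − T^[l] are non-increasing
in l, with equality iff T^{l+1} = T^{l+2}. -/
theorem threshold_B_antitone
    (h a hinv : ℝ → ℝ) (M : ℝ) (hM : 0 < M) (N : ℕ) (T : ℕ → ℝ)
    (hh : StrictAntiOn h (Set.Icc 0 M))
    (ha_pos : ∀ t ∈ Set.Icc 0 M, 0 < a t)
    (ha_anti : AntitoneOn a (Set.Icc 0 M))
    (hT_pos : ∀ i, 1 ≤ i → i ≤ N - 1 → 0 < T i)
    (hT_mono : ∀ i j, 1 ≤ i → i ≤ j → j ≤ N - 1 → T j ≤ T i)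
    (hinv_mem : ∀ i, 1 ≤ i → i ≤ N - 1 → hinv (T i) ∈ Set.Icc 0 M)
    (hinv_eq : ∀ i, 1 ≤ i → i ≤ N - 1 → h (hinv (T i)) = T i)
    (F : ℕ → ℝ → ℝ)
    (hF : ∀ n t, F n t = (M - t) * (1 + a t) + (n : ℝ) * h t)
    (S : ℕ → ℝ) (hS : ∀ l, S l = ∑ i ∈ Finset.Icc 1 l, T i)
    (B : ℕ → ℝ) (hB : ∀ l, B l = F (l + 1) (hinv (T (l + 1))) - S l)
    (l : ℕ) (hl : l + 1 ≤ N - 2) :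
    B (l + 1) ≤ B l ∧ (B l = B (l + 1) ↔ T (l + 1) = T (l + 2)) := by
  have h1 : 1 ≤ l + 1 := by omega
  have h2 : l + 1 ≤ N - 1 := by omega
  have h2' : 1 ≤ l + 2 := by omega
  have h3 : l + 2 ≤ N - 1 := by omega
  set x := hinv (T (l + 1)) with hxdef
  set y := hinv (T (l + 2)) with hydef
  have hxmem : x ∈ Set.Icc (0:ℝ) M := hinv_mem _ h1 h2
  have hymem : y ∈ Set.Icc (0:ℝ) M := hinv_mem _ h2' h3
  have hhx : h x = T (l + 1) := hinv_eq _ h1 h2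
  have hhy : h y = T (l + 2) := hinv_eq _ h2' h3
  have hTle : T (l + 2) ≤ T (l + 1) := hT_mono _ _ h1 (by omega) h3
  have hxy : x ≤ y := by
    by_contra hc
    push_neg at hc
    have := hh hymem hxmem hc
    rw [hhx, hhy] at this
    linarith
  -- B l - B (l+1) = F (l+2) x - F (l+2) y
  have hSsucc : S (l + 1) = S l + T (l + 1) := by
    rw [hS, hS, Finset.sum_Icc_succ_top h1]
  have hdiff : B l - B (l + 1) = F (l + 2) x - F (l + 2) y := by
    rw [hB, hB, hSsucc, hF, hF, hF, hhx]
    push_cast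
    ring
  -- monotonic pieces
  have hx0 : (0:ℝ) ≤ M - y := by
    have := hymem.2; linarith
  have hxyM : M - y ≤ M - x := by linarith
  have hay : 0 < 1 + a y := by linarith [ha_pos y hymem]
  have haxy : 1 + a y ≤ 1 + a x := by linarith [ha_anti hxmem hymem hxy]
  have hprod : (M - y) * (1 + a y) ≤ (M - x) * (1 + a x) := by nlinarith
  have hhle : h y ≤ h x := by rw [hhx, hhy]; exact hTle
  have hle : F (l + 2) y ≤ F (l + 2) x := by
    rw [hF, hF]
    have : ((l:ℝ) + 2) * h y ≤ ((l:ℝ) + 2) * h x := by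
      apply mul_le_mul_of_nonneg_left hhle; positivity
    push_cast
    nlinarith
  constructor
  · linarith [hdiff, hle]
  · constructor
    · intro hBeq
      by_contra hne
      have hlt : T (l + 2) < T (l + 1) := lt_of_le_of_ne hTle (fun e => hne e.symm)
      have hxlt : x < y := by
        rcases lt_or_eq_of_le hxy with h' | h'
        · exact h'
        · rw [h', hhy] at hhx; linarith
      have hhlt : h y < h x := hh hxmem hymem hxlt
      have : F (l + 2) y < F (l + 2) x := by
        rw [hF, hF]
        have : ((l:ℝ) + 2) * h y < ((l:ℝ) + 2) * h x := by
          apply mul_lt_mul_of_pos_left hhlt; positivity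
        push_cast
        nlinarith
      rw [hBeq] at hdiff
      linarith
    · intro hTeq
      have hxyeq : x = y := by rw [hxdef, hydef, hTeq]
      have : F (l + 2) x = F (l + 2) y := by rw [hxyeq]
      linarith [hdiff, this]
end

section
/- Let c₁, c₂ be strictly increasing, convex, C¹ on [0, M], M > 0. Suppose x₁ > x̄₁ ≥ 0 (weights of a group on arc 1, with x₂ = W − x₁ < x̄₂ = W − x̄₁), y₁ ≥ ȳ₁ (other players on arc 1, y₂ = M − W − y₁ ≤ ȳ₂), and there exist constants B, C > 0 such that: c₁(s + ȳ₁) + s·c₁′(s + ȳ₁) > B > c₂(t + ȳ₂) + t·c₂′(t + ȳ₂) for all s ∈ (x̄₁, x₁], t ∈ [x₂, x̄₂), and s·c₁′(s + p) > C > t·c₂′(t + q) for all such s, t and p ∈ (ȳ₁, M − W], q ∈ [0, ȳ₂). Then x₁·c₁(x₁ + y₁) + x₂·c₂(x₂ + y₂) > x̄₁·c₁(x̄₁ + ȳ₁) + x̄₂·c₂(x̄₂ + ȳ₂). -/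
private lemma mvt_gt (f f' : ℝ → ℝ) {a b K : ℝ} (hab : a < b)
    (hd : ∀ t, HasDerivAt f (f' t) t)
    (hK : ∀ t ∈ Set.Ioo a b, K < f' t) : K * (b - a) < f b - f a := by
  obtain ⟨c, hc, hceq⟩ := exists_hasDerivAt_eq_slope f f' hab
    (fun x _ => (hd x).continuousAt.continuousWithinAt) (fun x _ => hd x)
  have h := hK c hc
  rw [hceq] at h
  have hba : 0 < b - a := sub_pos.mpr hab
  calc K * (b - a) < ((f b - f a) / (b - a)) * (b - a) :=
        mul_lt_mul_of_pos_right h hba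
    _ = f b - f a := div_mul_cancel₀ _ hba.ne'

private lemma mvt_lt (f f' : ℝ → ℝ) {a b K : ℝ} (hab : a < b)
    (hd : ∀ t, HasDerivAt f (f' t) t)
    (hK : ∀ t ∈ Set.Ioo a b, f' t < K) : f b - f a < K * (b - a) := by
  obtain ⟨c, hc, hceq⟩ := exists_hasDerivAt_eq_slope f f' hab
    (fun x _ => (hd x).continuousAt.continuousWithinAt) (fun x _ => hd x)
  have h := hK c hc
  rw [hceq] at h
  have hba : 0 < b - a := sub_pos.mpr hab
  calc f b - f a = ((f b - f a) / (b - a)) * (b - a) := (div_mul_cancel₀ _ hba.ne').symm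
    _ < K * (b - a) := mul_lt_mul_of_pos_right h hba

/-- core inequality of the free-riding comparison lemma: if the
decentralizing player's deputies put strictly more weight on the cheap arc while
the opponents weakly shift toward it, her total cost strictly increases. -/
theorem free_riding_cost_comparison
    (c₁ c₂ d₁ d₂ : ℝ → ℝ) (M W x₁ xbar₁ y₁ ybar₁ B C : ℝ)
    (hc₁mono : StrictMonoOn c₁ (Set.Icc 0 M))
    (hc₂mono : StrictMonoOn c₂ (Set.Icc 0 M))
    (hc₁conv : ConvexOn ℝ (Set.Icc 0 M) c₁)
    (hc₂conv : ConvexOn ℝ (Set.Icc 0 M) c₂)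
    (hd₁ : ∀ t, HasDerivAt c₁ (d₁ t) t)
    (hd₂ : ∀ t, HasDerivAt c₂ (d₂ t) t)
    (hx : xbar₁ < x₁) (hxbarnn : 0 ≤ xbar₁) (hx₂nn : 0 ≤ W - x₁)
    (hy : ybar₁ ≤ y₁) (hy₂nn : 0 ≤ M - W - y₁) (hybarnn : 0 ≤ ybar₁)
    (hB : 0 < B) (hC : 0 < C)
    (hB1 : ∀ s ∈ Set.Ioc xbar₁ x₁, B < c₁ (s + ybar₁) + s * d₁ (s + ybar₁))
    (hB2 : ∀ t ∈ Set.Ico (W - x₁) (W - xbar₁),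
      c₂ (t + (M - W - ybar₁)) + t * d₂ (t + (M - W - ybar₁)) < B)
    (hC1 : ∀ s ∈ Set.Ioc xbar₁ x₁, ∀ p ∈ Set.Ioc ybar₁ (M - W), C < s * d₁ (s + p))
    (hC2 : ∀ t ∈ Set.Ico (W - x₁) (W - xbar₁), ∀ q ∈ Set.Ico (0:ℝ) (M - W - ybar₁),
      t * d₂ (t + q) < C) :
    xbar₁ * c₁ (xbar₁ + ybar₁) + (W - xbar₁) * c₂ ((W - xbar₁) + (M - W - ybar₁)) <
      x₁ * c₁ (x₁ + y₁) + (W - x₁) * c₂ ((W - x₁) + (M - W - y₁)) := by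
  have hx2lt : W - x₁ < W - xbar₁ := by linarith
  -- A1 : B * (x₁ - xbar₁) < x₁ c₁(x₁+ȳ₁) - xbar₁ c₁(xbar₁+ȳ₁)
  have hF₁ : ∀ s : ℝ, HasDerivAt (fun s => s * c₁ (s + ybar₁))
      (c₁ (s + ybar₁) + s * d₁ (s + ybar₁)) s := by
    intro s
    have h1 : HasDerivAt (fun s : ℝ => c₁ (s + ybar₁)) (d₁ (s + ybar₁)) s := by
      have := (hd₁ (s + ybar₁)).comp s ((hasDerivAt_id s).add_const ybar₁)
      exact this.congr_deriv (mul_one _)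
    exact ((hasDerivAt_id s).mul h1).congr_deriv (by simp)
  have hA1 : B * (x₁ - xbar₁) <
      x₁ * c₁ (x₁ + ybar₁) - xbar₁ * c₁ (xbar₁ + ybar₁) :=
    mvt_gt _ _ hx hF₁ (fun t ht => hB1 t ⟨ht.1, ht.2.le⟩)
  -- A2 : x̄₂ c₂(x̄₂+ȳ₂) - x₂ c₂(x₂+ȳ₂) < B * (x₁ - xbar₁)
  have hF₂ : ∀ t : ℝ, HasDerivAt (fun t => t * c₂ (t + (M - W - ybar₁)))
      (c₂ (t + (M - W - ybar₁)) + t * d₂ (t + (M - W - ybar₁))) t := by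
    intro t
    have h1 : HasDerivAt (fun t : ℝ => c₂ (t + (M - W - ybar₁)))
        (d₂ (t + (M - W - ybar₁))) t := by
      have := (hd₂ (t + (M - W - ybar₁))).comp t ((hasDerivAt_id t).add_const _)
      exact this.congr_deriv (mul_one _)
    exact ((hasDerivAt_id t).mul h1).congr_deriv (by simp)
  have hA2 : (W - xbar₁) * c₂ ((W - xbar₁) + (M - W - ybar₁)) -
      (W - x₁) * c₂ ((W - x₁) + (M - W - ybar₁)) <
      B * (x₁ - xbar₁) := by
    have := mvt_lt _ _ hx2lt hF₂ (fun t ht => hB2 t ⟨ht.1.le, ht.2⟩)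
    have e : B * ((W - xbar₁) - (W - x₁)) = B * (x₁ - xbar₁) := by ring
    linarith [this, e.le, e.ge]
  -- A3 : C * (y₁ - ybar₁) ≤ x₁ c₁(x₁+y₁) - x₁ c₁(x₁+ȳ₁)
  have hG₁ : ∀ p : ℝ, HasDerivAt (fun p => x₁ * c₁ (x₁ + p)) (x₁ * d₁ (x₁ + p)) p := by
    intro p
    have h1 : HasDerivAt (fun p : ℝ => c₁ (x₁ + p)) (d₁ (x₁ + p)) p := by
      have := (hd₁ (x₁ + p)).comp p ((hasDerivAt_id p).const_add x₁)
      exact this.congr_deriv (mul_one _)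
    simpa using h1.const_mul x₁
  have hA3 : C * (y₁ - ybar₁) ≤ x₁ * c₁ (x₁ + y₁) - x₁ * c₁ (x₁ + ybar₁) := by
    rcases eq_or_lt_of_le hy with h | h
    · simp [← h]
    · exact (mvt_gt _ _ h hG₁ (fun p hp =>
        hC1 x₁ ⟨hx, le_refl x₁⟩ p ⟨hp.1, by linarith [hp.2]⟩)).le
  -- A4 : x₂ c₂(x₂+ȳ₂) - x₂ c₂(x₂+y₂) ≤ C * (y₁ - ybar₁)
  have hG₂ : ∀ q : ℝ, HasDerivAt (fun q => (W - x₁) * c₂ ((W - x₁) + q))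
      ((W - x₁) * d₂ ((W - x₁) + q)) q := by
    intro q
    have h1 : HasDerivAt (fun q : ℝ => c₂ ((W - x₁) + q)) (d₂ ((W - x₁) + q)) q := by
      have := (hd₂ ((W - x₁) + q)).comp q ((hasDerivAt_id q).const_add (W - x₁))
      exact this.congr_deriv (mul_one _)
    simpa using h1.const_mul (W - x₁)
  have hA4 : (W - x₁) * c₂ ((W - x₁) + (M - W - ybar₁)) -
      (W - x₁) * c₂ ((W - x₁) + (M - W - y₁)) ≤ C * (y₁ - ybar₁) := by
    rcases eq_or_lt_of_le hy with h | h
    · simp [← h]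
    · have hq : M - W - y₁ < M - W - ybar₁ := by linarith
      have := mvt_lt _ _ hq hG₂ (fun q hqq =>
        hC2 (W - x₁) ⟨le_refl _, hx2lt⟩ q ⟨by linarith [hqq.1], hqq.2⟩)
      have e : C * ((M - W - ybar₁) - (M - W - y₁)) = C * (y₁ - ybar₁) := by ring
      linarith [this, e.le, e.ge]
  linarith [hA1, hA2, hA3, hA4]
end
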